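/- arXiv:2312.02182 — 5 statements merged into one kernel-verified Lean document; each statement's English description precedes it below -/
import Mathlib

section
/- If F : R^d → R is C¹, M-smooth, and (m,b)-dissipative (⟨∇F(x), x⟩ ≥ m‖x‖² - b for all x), then there exists a constant C depending only on M, ‖∇F(0)‖, m, b, δ such that F(x) - F(y) ≤ C √( min(1, δ^{-1}‖x-y‖) (1 + ‖x‖⁴ + ‖y‖⁴) ) for all x, y ∈ R^d and every fixed δ ∈ (0,1). -/
open RealInnerProductSpace

lemma stmt_3_aux1 (G M' a b2 : ℝ) (hG0 : 0 ≤ G) (hM'0 : 0 ≤ M') (ha0 : 0 ≤ a) (hb0 : 0 ≤ b2) :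
    G + M' * (a + b2) ≤ (G + 2 * M') * (1 + a ^ 2 + b2 ^ 2) := by
  nlinarith [mul_nonneg hG0 (add_nonneg (sq_nonneg a) (sq_nonneg b2)),
    mul_nonneg hM'0 (sq_nonneg (a - 1)), mul_nonneg hM'0 (sq_nonneg (b2 - 1)),
    mul_nonneg hM'0 (add_nonneg (sq_nonneg a) (sq_nonneg b2))]

lemma stmt_3_aux2 (G M' a b2 : ℝ) (hG0 : 0 ≤ G) (hM'0 : 0 ≤ M') (ha0 : 0 ≤ a) (hb0 : 0 ≤ b2) :
    (G + M' * (a + b2)) * (a + b2) ≤ (G + 2 * M') * (1 + a ^ 2 + b2 ^ 2) := by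
  nlinarith [mul_nonneg hG0 (sq_nonneg (2 * a - 1)), mul_nonneg hG0 (sq_nonneg (2 * b2 - 1)),
    mul_nonneg hM'0 (sq_nonneg (a - b2)), mul_nonneg (mul_nonneg hM'0 ha0) hb0]

theorem stmt_3 (d : ℕ) (M m b δ : ℝ) (hδ : δ ∈ Set.Ioo (0:ℝ) 1)
    (F : EuclideanSpace ℝ (Fin d) → ℝ)
    (hF : ContDiff ℝ 1 F)
    (hM : ∀ x y, ‖gradient F x - gradient F y‖ ≤ M * ‖x - y‖)
    (hdiss : ∀ x, m * ‖x‖ ^ 2 - b ≤ ⟪gradient F x, x⟫) :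
    ∃ C : ℝ, ∀ x y : EuclideanSpace ℝ (Fin d),
      F x - F y ≤ C * Real.sqrt (min 1 (δ⁻¹ * ‖x - y‖) * (1 + ‖x‖ ^ 4 + ‖y‖ ^ 4)) := by
  obtain ⟨hδ0, hδ1⟩ := hδ
  set G : ℝ := ‖gradient F 0‖ with hGdef
  set M' : ℝ := max M 0 with hM'def
  have hM'0 : (0:ℝ) ≤ M' := le_max_right _ _
  have hG0 : (0:ℝ) ≤ G := norm_nonneg _
  have hLip : ∀ x y : EuclideanSpace ℝ (Fin d),
      ‖gradient F x - gradient F y‖ ≤ M' * ‖x - y‖ := fun x y =>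
    (hM x y).trans (mul_le_mul_of_nonneg_right (le_max_left _ _) (norm_nonneg _))
  have hdiff : Differentiable ℝ F := hF.differentiable one_ne_zero
  have hgradnorm : ∀ z : EuclideanSpace ℝ (Fin d), ‖fderiv ℝ F z‖ = ‖gradient F z‖ := by
    intro z
    rw [gradient]
    exact ((InnerProductSpace.toDual ℝ _).symm.norm_map (fderiv ℝ F z)).symm
  have core : ∀ x y : EuclideanSpace ℝ (Fin d),
      F x - F y ≤ (G + M' * (‖x‖ + ‖y‖)) * ‖x - y‖ := by
    intro x y
    set R := ‖x‖ + ‖y‖ with hR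
    have hball : Convex ℝ (Metric.closedBall (0:EuclideanSpace ℝ (Fin d)) R) :=
      convex_closedBall _ _
    have hxmem : x ∈ Metric.closedBall (0:EuclideanSpace ℝ (Fin d)) R := by
      simp only [Metric.mem_closedBall, dist_zero_right, hR]
      have := norm_nonneg y; linarith
    have hymem : y ∈ Metric.closedBall (0:EuclideanSpace ℝ (Fin d)) R := by
      simp only [Metric.mem_closedBall, dist_zero_right, hR]
      have := norm_nonneg x; linarith
    have bound : ∀ z ∈ Metric.closedBall (0:EuclideanSpace ℝ (Fin d)) R,
        ‖fderiv ℝ F z‖ ≤ G + M' * R := by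
      intro z hz
      rw [hgradnorm]
      have h1 : ‖gradient F z - gradient F 0‖ ≤ M' * ‖z - 0‖ := hLip z 0
      rw [sub_zero] at h1
      have hzR : ‖z‖ ≤ R := by
        simpa only [Metric.mem_closedBall, dist_zero_right] using hz
      have h2 : ‖gradient F z‖ - ‖gradient F 0‖ ≤ ‖gradient F z - gradient F 0‖ :=
        norm_sub_norm_le _ _
      have h3 : M' * ‖z‖ ≤ M' * R := mul_le_mul_of_nonneg_left hzR hM'0
      linarith
    have hmvt : ‖F x - F y‖ ≤ (G + M' * R) * ‖x - y‖ :=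
      hball.norm_image_sub_le_of_norm_fderiv_le
        (fun z _ => hdiff z) bound hymem hxmem
    calc F x - F y ≤ ‖F x - F y‖ := le_abs_self _
      _ ≤ (G + M' * R) * ‖x - y‖ := hmvt
  refine ⟨(G + 2 * M') * Real.sqrt 3, fun x y => ?_⟩
  set a := ‖x‖ with ha
  set b2 := ‖y‖ with hb2
  set r := ‖x - y‖ with hr
  set S : ℝ := 1 + a ^ 4 + b2 ^ 4 with hS
  have ha0 : 0 ≤ a := norm_nonneg _
  have hb0 : 0 ≤ b2 := norm_nonneg _
  have hr0 : 0 ≤ r := norm_nonneg _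
  have hSpos : (0:ℝ) < S := by positivity
  have hsum : 1 + a ^ 2 + b2 ^ 2 ≤ Real.sqrt (3 * S) := by
    have h1 : (1 + a ^ 2 + b2 ^ 2) = Real.sqrt ((1 + a ^ 2 + b2 ^ 2) ^ 2) :=
      (Real.sqrt_sq (by positivity)).symm
    rw [h1]
    apply Real.sqrt_le_sqrt
    nlinarith [sq_nonneg (a ^ 2 - b2 ^ 2), sq_nonneg (a ^ 2 - 1), sq_nonneg (b2 ^ 2 - 1)]
  have hfac0 : 0 ≤ G + M' * (a + b2) :=
    add_nonneg hG0 (mul_nonneg hM'0 (add_nonneg ha0 hb0))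
  have hK0 : (0:ℝ) ≤ G + 2 * M' := by linarith
  rcases le_total (δ⁻¹ * r) 1 with hcase | hcase
  · -- min = δ⁻¹ * r
    rw [min_eq_right hcase]
    have hrδ : r ≤ δ := by
      have := (inv_mul_le_iff₀ hδ0).mp hcase
      linarith
    have hr1 : r ≤ 1 := hrδ.trans hδ1.le
    have hrs : r ≤ Real.sqrt r := by
      have h2 : r ^ 2 ≤ r := by nlinarith
      calc r = Real.sqrt (r ^ 2) := (Real.sqrt_sq hr0).symm
        _ ≤ Real.sqrt r := Real.sqrt_le_sqrt h2
    have hfacK : G + M' * (a + b2) ≤ (G + 2 * M') * (1 + a ^ 2 + b2 ^ 2) :=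
      stmt_3_aux1 G M' a b2 hG0 hM'0 ha0 hb0
    have step1 : F x - F y ≤ (G + 2 * M') * (1 + a ^ 2 + b2 ^ 2) * r :=
      (core x y).trans (mul_le_mul_of_nonneg_right hfacK hr0)
    have step2 : (G + 2 * M') * (1 + a ^ 2 + b2 ^ 2) * r
        ≤ (G + 2 * M') * Real.sqrt (3 * S) * Real.sqrt r := by
      apply mul_le_mul
      · exact mul_le_mul_of_nonneg_left hsum hK0
      · exact hrs
      · exact hr0
      · positivity
    have step3 : (G + 2 * M') * Real.sqrt (3 * S) * Real.sqrt r
        ≤ (G + 2 * M') * Real.sqrt 3 * Real.sqrt (δ⁻¹ * r * S) := by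
      have h1 : Real.sqrt (3 * S) * Real.sqrt r = Real.sqrt 3 * Real.sqrt (r * S) := by
        rw [← Real.sqrt_mul (by positivity : (0:ℝ) ≤ 3 * S) r,
          ← Real.sqrt_mul (by norm_num : (0:ℝ) ≤ 3) (r * S)]
        congr 1
        ring
      rw [mul_assoc, h1, ← mul_assoc]
      apply mul_le_mul_of_nonneg_left _ (by positivity)
      apply Real.sqrt_le_sqrt
      have hinv1 : (1:ℝ) ≤ δ⁻¹ := one_le_inv_iff₀.mpr ⟨hδ0, hδ1.le⟩
      have h2 : r * S ≤ δ⁻¹ * (r * S) := le_mul_of_one_le_left (by positivity) hinv1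
      linarith [h2, mul_assoc δ⁻¹ r S]
    linarith
  · -- min = 1
    rw [min_eq_left hcase, one_mul]
    have hrab : r ≤ a + b2 := norm_sub_le x y
    have step1 : F x - F y ≤ (G + M' * (a + b2)) * (a + b2) :=
      (core x y).trans (mul_le_mul_of_nonneg_left hrab hfac0)
    have step2 : (G + M' * (a + b2)) * (a + b2) ≤ (G + 2 * M') * (1 + a ^ 2 + b2 ^ 2) :=
      stmt_3_aux2 G M' a b2 hG0 hM'0 ha0 hb0
    have step3 : (G + 2 * M') * (1 + a ^ 2 + b2 ^ 2)
        ≤ (G + 2 * M') * Real.sqrt 3 * Real.sqrt S := by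
      rw [mul_assoc, ← Real.sqrt_mul (by norm_num : (0:ℝ) ≤ 3)]
      exact mul_le_mul_of_nonneg_left hsum hK0
    linarith
end

section
/- Functional H_F is bounded: let r > 0, c₁, c₂, ε > 0 with 2c₁ > c₂ and min(c₁,c₂) > r, and F : R^d → R be C¹ with bounded gradient. Then for every continuous path ξ : (-∞,0] → R^d with sup_{s≤0} e^{rs}‖ξ(s)‖ < ∞, the vector H_F(ξ) = -( c₁ ∫_{-∞}^0 e^{c₁ s} ∇F(ξ(s)) ds ) / √( ε + c₂ ∫_{-∞}^0 e^{c₂ s} ‖∇F(ξ(s))‖² ds ) satisfies ‖H_F(ξ)‖ ≤ c₁ / √((2c₁ - c₂) c₂). -/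
open MeasureTheory Set Real

lemma expIntOn {a : ℝ} (ha : 0 < a) :
    IntegrableOn (fun s : ℝ => Real.exp (a * s)) (Set.Iic 0) := by
  have h : IntegrableOn (fun x : ℝ => Real.exp (-a * x)) (Ioi (0:ℝ)) :=
    exp_neg_integrableOn_Ioi 0 ha
  have h2 : Integrable ((Ioi (0:ℝ)).indicator fun x => Real.exp (-a * x)) :=
    (integrable_indicator_iff measurableSet_Ioi).2 h
  have h3 := h2.comp_mul_left' (R := (-1:ℝ)) (by norm_num)
  have h4 : (fun x => ((Ioi (0:ℝ)).indicator fun x => Real.exp (-a * x)) (-1 * x))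
      = (Iio (0:ℝ)).indicator (fun s => Real.exp (a * s)) := by
    ext x
    by_cases hx : x < 0
    · simp [Set.indicator, hx, neg_pos.2 hx, neg_mul, mul_neg]
    · simp [Set.indicator, hx, not_lt.1 hx, neg_mul, mul_neg,
        (by push_neg at hx; linarith : ¬ (0:ℝ) < -x)]
  rw [h4] at h3
  have h5 : IntegrableOn (fun s : ℝ => Real.exp (a * s)) (Iio 0) :=
    (integrable_indicator_iff measurableSet_Iio).1 h3
  rwa [integrableOn_Iic_iff_integrableOn_Iio]

lemma expIntVal {a : ℝ} (ha : 0 < a) :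
    ∫ s in Set.Iic (0:ℝ), Real.exp (a * s) = a⁻¹ := by
  have h1 := integral_comp_neg_Ioi 0 (fun x => Real.exp (a * x))
  simp only [neg_zero] at h1
  rw [← h1]
  have h2 := integral_comp_mul_left_Ioi (fun x => Real.exp (-x)) 0 ha
  simp only [mul_zero, integral_exp_neg_Ioi_zero, smul_eq_mul, mul_one] at h2
  rw [← h2]
  congr 1 with x
  ring_nf


/-- The drift functional `H_F` of the Adam-like algorithm. -/
noncomputable def HF (d : ℕ) (c₁ c₂ ε : ℝ) (F : EuclideanSpace ℝ (Fin d) → ℝ)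
    (ξ : ℝ → EuclideanSpace ℝ (Fin d)) : EuclideanSpace ℝ (Fin d) :=
  -((Real.sqrt (ε + c₂ * ∫ s in Set.Iic (0:ℝ),
        Real.exp (c₂ * s) * ‖gradient F (ξ s)‖ ^ 2))⁻¹ •
      (c₁ • ∫ s in Set.Iic (0:ℝ), Real.exp (c₁ * s) • gradient F (ξ s)))

theorem stmt_9 (d : ℕ) (r c₁ c₂ ε : ℝ) (hr : 0 < r) (hc : c₂ < 2 * c₁)
    (hrc : r < min c₁ c₂) (hε : 0 < ε) (hc₂ : 0 < c₂)
    (F : EuclideanSpace ℝ (Fin d) → ℝ) (hF : ContDiff ℝ 1 F)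
    (A : ℝ) (hA : ∀ x, ‖gradient F x‖ ≤ A)
    (ξ : ℝ → EuclideanSpace ℝ (Fin d)) (hξ : Continuous ξ)
    (B : ℝ) (hξB : ∀ s ≤ (0:ℝ), Real.exp (r * s) * ‖ξ s‖ ≤ B) :
    ‖HF d c₁ c₂ ε F ξ‖ ≤ c₁ / Real.sqrt ((2 * c₁ - c₂) * c₂) := by
  have hc₁ : 0 < c₁ := lt_of_lt_of_le (hr.trans hrc) (min_le_left _ _)
  set G : ℝ → EuclideanSpace ℝ (Fin d) := fun s => gradient F (ξ s) with hGdef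
  have hGc : Continuous G := by
    have : Continuous (gradient F) := by
      have h1 : Continuous (fderiv ℝ F) := hF.continuous_fderiv one_ne_zero
      have : gradient F = fun x =>
          (InnerProductSpace.toDual ℝ (EuclideanSpace ℝ (Fin d))).symm (fderiv ℝ F x) := rfl
      rw [this]
      exact (InnerProductSpace.toDual ℝ _).symm.continuous.comp h1
    exact this.comp hξ
  have hA0 : 0 ≤ A := (norm_nonneg _).trans (hA 0)
  set I₂ : ℝ := ∫ s in Set.Iic (0:ℝ), Real.exp (c₂ * s) * ‖G s‖ ^ 2 with hI₂def
  set N : EuclideanSpace ℝ (Fin d) := ∫ s in Set.Iic (0:ℝ), Real.exp (c₁ * s) • G s with hNdef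
  -- integrability of the I₂ integrand
  have hint2 : IntegrableOn (fun s => Real.exp (c₂ * s) * ‖G s‖ ^ 2) (Set.Iic 0) := by
    refine Integrable.mono' ((expIntOn hc₂).mul_const (A ^ 2)) ?_ ?_
    · exact ((Real.continuous_exp.comp (continuous_const.mul continuous_id)).mul
        (hGc.norm.pow 2)).aestronglyMeasurable
    · filter_upwards with s
      have h1 : ‖G s‖ ^ 2 ≤ A ^ 2 := by
        have := hA (ξ s); nlinarith [norm_nonneg (G s)]
      have h2 : (0:ℝ) ≤ Real.exp (c₂ * s) * ‖G s‖ ^ 2 := by positivity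
      rw [Real.norm_of_nonneg h2]
      exact mul_le_mul_of_nonneg_left h1 (Real.exp_pos _).le
  have hI₂0 : 0 ≤ I₂ := integral_nonneg fun s => by positivity
  -- norm of N bounded by integral of norms
  have hNnorm : ‖N‖ ≤ ∫ s in Set.Iic (0:ℝ), Real.exp (c₁ * s) * ‖G s‖ := by
    refine (norm_integral_le_integral_norm _).trans_eq ?_
    refine setIntegral_congr_fun measurableSet_Iic fun s _ => ?_
    rw [norm_smul, Real.norm_eq_abs, abs_of_pos (Real.exp_pos _)]
  -- Cauchy-Schwarz
  have h2c' : 0 < 2 * c₁ - c₂ := by linarith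
  have e2 : ∀ x : ℝ, Real.exp x ^ 2 = Real.exp (2 * x) := fun x => by
    rw [sq, ← Real.exp_add]; ring_nf
  have hCS : ∫ s in Set.Iic (0:ℝ), Real.exp (c₁ * s) * ‖G s‖ ≤
      Real.sqrt ((2 * c₁ - c₂)⁻¹) * Real.sqrt I₂ := by
    set f : ℝ → ℝ := fun s => Real.exp ((c₁ - c₂ / 2) * s) with hfdef
    set g : ℝ → ℝ := fun s => Real.exp ((c₂ / 2) * s) * ‖G s‖ with hgdef
    have hfm : AEStronglyMeasurable f (volume.restrict (Set.Iic 0)) :=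
      (Real.continuous_exp.comp (continuous_const.mul continuous_id)).aestronglyMeasurable
    have hgm : AEStronglyMeasurable g (volume.restrict (Set.Iic 0)) :=
      ((Real.continuous_exp.comp
        (continuous_const.mul continuous_id)).mul hGc.norm).aestronglyMeasurable
    have hfsq : Integrable (fun s => f s ^ 2) (volume.restrict (Set.Iic 0)) := by
      have : (fun s => f s ^ 2) = fun s => Real.exp ((2 * c₁ - c₂) * s) := by
        funext s; rw [hfdef]; simp only []; rw [e2]; congr 1; ring
      rw [this]; exact expIntOn h2c'
    have hgsq : Integrable (fun s => g s ^ 2) (volume.restrict (Set.Iic 0)) := by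
      have : (fun s => g s ^ 2) = fun s => Real.exp (c₂ * s) * ‖G s‖ ^ 2 := by
        funext s; rw [hgdef]; simp only []; rw [mul_pow, e2]
        congr 2; ring
      rw [this]; exact hint2
    have hpq : Real.HolderConjugate 2 2 := Real.HolderConjugate.two_two
    have hof : ENNReal.ofReal (2:ℝ) = 2 := by
      rw [ENNReal.ofReal_ofNat]
    have hf2 : MemLp f (ENNReal.ofReal 2) (volume.restrict (Set.Iic 0)) := by
      rw [hof]; exact (memLp_two_iff_integrable_sq hfm).2 hfsq
    have hg2 : MemLp g (ENNReal.ofReal 2) (volume.restrict (Set.Iic 0)) := by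
      rw [hof]; exact (memLp_two_iff_integrable_sq hgm).2 hgsq
    have h := MeasureTheory.integral_mul_le_Lp_mul_Lq_of_nonneg hpq
      (Filter.Eventually.of_forall fun s => (Real.exp_pos _).le)
      (Filter.Eventually.of_forall fun s =>
        mul_nonneg (Real.exp_pos _).le (norm_nonneg _)) hf2 hg2
    have hL : ∫ s in Set.Iic (0:ℝ), f s * g s
        = ∫ s in Set.Iic (0:ℝ), Real.exp (c₁ * s) * ‖G s‖ := by
      refine setIntegral_congr_fun measurableSet_Iic fun s _ => ?_
      rw [hfdef, hgdef]; simp only []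
      rw [← mul_assoc, ← Real.exp_add]; congr 2; ring
    have hR1 : ∫ s in Set.Iic (0:ℝ), f s ^ (2:ℝ) = (2 * c₁ - c₂)⁻¹ := by
      have heq : ∫ s in Set.Iic (0:ℝ), f s ^ (2:ℝ)
          = ∫ s in Set.Iic (0:ℝ), Real.exp ((2 * c₁ - c₂) * s) := by
        refine setIntegral_congr_fun measurableSet_Iic fun s _ => ?_
        rw [show ((2:ℝ)) = ((2:ℕ):ℝ) by norm_num, Real.rpow_natCast, hfdef]
        simp only []; rw [e2]; congr 1; ring
      rw [heq, expIntVal h2c']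
    have hR2 : ∫ s in Set.Iic (0:ℝ), g s ^ (2:ℝ) = I₂ := by
      have heq : ∫ s in Set.Iic (0:ℝ), g s ^ (2:ℝ)
          = ∫ s in Set.Iic (0:ℝ), Real.exp (c₂ * s) * ‖G s‖ ^ 2 := by
        refine setIntegral_congr_fun measurableSet_Iic fun s _ => ?_
        rw [show ((2:ℝ)) = ((2:ℕ):ℝ) by norm_num, Real.rpow_natCast, hgdef]
        simp only []; rw [mul_pow, e2]; congr 2; ring
      rw [heq]
    rw [hL, hR1, hR2] at h
    rw [Real.sqrt_eq_rpow, Real.sqrt_eq_rpow]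
    convert h using 2 <;> norm_num
  -- final arithmetic
  have hS : 0 < (2 * c₁ - c₂) * c₂ := by nlinarith
  have hDpos : 0 < Real.sqrt (ε + c₂ * I₂) := Real.sqrt_pos.2 (by nlinarith)
  have h2c : 0 < 2 * c₁ - c₂ := by linarith
  have hkey : ‖N‖ * Real.sqrt ((2 * c₁ - c₂) * c₂) ≤ Real.sqrt (ε + c₂ * I₂) := by
    have h1 : ‖N‖ * Real.sqrt ((2 * c₁ - c₂) * c₂) ≤
        (Real.sqrt ((2 * c₁ - c₂)⁻¹) * Real.sqrt I₂) * Real.sqrt ((2 * c₁ - c₂) * c₂) :=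
      mul_le_mul_of_nonneg_right (hNnorm.trans hCS) (Real.sqrt_nonneg _)
    refine h1.trans ?_
    rw [← Real.sqrt_mul (inv_nonneg.2 h2c.le),
      ← Real.sqrt_mul (mul_nonneg (inv_nonneg.2 h2c.le) hI₂0)]
    refine Real.sqrt_le_sqrt ?_
    have h2 : (2 * c₁ - c₂)⁻¹ * I₂ * ((2 * c₁ - c₂) * c₂) = c₂ * I₂ := by
      rw [show (2 * c₁ - c₂)⁻¹ * I₂ * ((2 * c₁ - c₂) * c₂)
          = ((2 * c₁ - c₂)⁻¹ * (2 * c₁ - c₂)) * (I₂ * c₂) by ring,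
        inv_mul_cancel₀ h2c.ne', one_mul, mul_comm]
    rw [h2]; linarith
  have hHF : ‖HF d c₁ c₂ ε F ξ‖ = (Real.sqrt (ε + c₂ * I₂))⁻¹ * (c₁ * ‖N‖) := by
    rw [HF, norm_neg, norm_smul, norm_smul, Real.norm_eq_abs, Real.norm_eq_abs,
      abs_of_nonneg (inv_nonneg.2 (Real.sqrt_nonneg _)), abs_of_pos hc₁]
  rw [hHF, inv_mul_eq_div, div_le_div_iff₀ hDpos (Real.sqrt_pos.2 hS)]
  calc c₁ * ‖N‖ * Real.sqrt ((2 * c₁ - c₂) * c₂)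
      = c₁ * (‖N‖ * Real.sqrt ((2 * c₁ - c₂) * c₂)) := by ring
    _ ≤ c₁ * Real.sqrt (ε + c₂ * I₂) := mul_le_mul_of_nonneg_left hkey hc₁.le
end

section
/- Difference of drift functionals for two losses: let F, G : R^d → R be C¹ and M-smooth with bounded gradients A_F = sup‖∇F‖, A_G = sup‖∇G‖, and let ε, c₁, c₂ > 0 with 2c₁ > c₂. Then ‖H_F(ξ) - H_G(ξ)‖ ≤ C ∫_{-∞}^0 e^{min(c₁,c₂) s} ‖∇F(ξ(s)) - ∇G(ξ(s))‖ ds for all ξ ∈ C_r, where C depends only on c₁, c₂, ε, A_F, A_G, M, d. -/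
open MeasureTheory Set Real Filter intervalIntegral

lemma integrableOn_exp_mul_Iic' {c : ℝ} (hc : 0 < c) :
    IntegrableOn (fun s : ℝ => Real.exp (c * s)) (Set.Iic 0) := by
  have hcont : Continuous (fun s : ℝ => Real.exp (c * s)) :=
    Real.continuous_exp.comp (continuous_const.mul continuous_id)
  refine integrableOn_Iic_of_intervalIntegral_norm_bounded c⁻¹ 0
    (fun y => hcont.integrableOn_Ioc) Filter.tendsto_id ?_
  filter_upwards [Iic_mem_atBot 0] with y hy
  simp only [id_eq]
  have h0 : (∫ x in y..(0:ℝ), ‖Real.exp (c * x)‖) = ∫ x in y..(0:ℝ), Real.exp (c * x) := by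
    simp_rw [Real.norm_eq_abs, abs_of_pos (Real.exp_pos _)]
  rw [h0]
  have h1 : (∫ x in y..0, Real.exp (c * x)) = c⁻¹ • ∫ x in (c*y)..(c*0), Real.exp x :=
    intervalIntegral.integral_comp_mul_left Real.exp hc.ne'
  rw [h1, integral_exp]
  have h2 : Real.exp (c * 0) - Real.exp (c * y) ≤ 1 := by
    simp only [mul_zero, Real.exp_zero]
    linarith [Real.exp_pos (c * y)]
  have h3 : 0 ≤ Real.exp (c * 0) - Real.exp (c * y) := by
    simp only [mul_zero, Real.exp_zero]
    have : c * y ≤ 0 := mul_nonpos_of_nonneg_of_nonpos hc.le hy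
    linarith [Real.exp_le_one_iff.mpr this]
  rw [smul_eq_mul]
  calc c⁻¹ * (Real.exp (c * 0) - Real.exp (c * y)) ≤ c⁻¹ * 1 :=
        mul_le_mul_of_nonneg_left h2 (inv_nonneg.mpr hc.le)
    _ = c⁻¹ := mul_one _

lemma integral_exp_mul_Iic' {c : ℝ} (hc : 0 < c) :
    (∫ s in Set.Iic (0:ℝ), Real.exp (c * s)) = c⁻¹ := by
  have h : (∫ x in Ioi (0:ℝ), Real.exp (c * (-x))) = ∫ s in Iic (-(0:ℝ)), Real.exp (c * s) :=
    integral_comp_neg_Ioi 0 (fun s => Real.exp (c * s))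
  rw [neg_zero] at h
  rw [← h]
  have h2 : (∫ x in Ioi (0:ℝ), Real.exp (-(c * x))) = c⁻¹ • ∫ x in Ioi (c * 0), Real.exp (-x) :=
    integral_comp_mul_left_Ioi (fun x => Real.exp (-x)) 0 hc
  simp only [mul_neg] at h ⊢
  rw [h2, mul_zero, integral_exp_neg_Ioi_zero, smul_eq_mul, mul_one]

/-- Integrability of exponentially weighted bounded continuous functions. -/
lemma integrableOn_exp_smul {E : Type*} [NormedAddCommGroup E] [NormedSpace ℝ E]
    {c A : ℝ} (hc : 0 < c) (g : ℝ → E) (hg : Continuous g) (hA : ∀ s, ‖g s‖ ≤ A) :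
    IntegrableOn (fun s => Real.exp (c * s) • g s) (Set.Iic (0:ℝ)) := by
  refine Integrable.mono' ((integrableOn_exp_mul_Iic' hc).mul_const A)
    (((Real.continuous_exp.comp (continuous_const.mul continuous_id)).smul
      hg).aestronglyMeasurable.restrict) ?_
  filter_upwards with s
  rw [norm_smul, Real.norm_eq_abs, abs_of_pos (Real.exp_pos _)]
  exact mul_le_mul_of_nonneg_left (hA s) (Real.exp_pos _).le

lemma integrableOn_exp_mul_fun {c A : ℝ} (hc : 0 < c) (g : ℝ → ℝ) (hg : Continuous g)
    (hA : ∀ s, |g s| ≤ A) :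
    IntegrableOn (fun s => Real.exp (c * s) * g s) (Set.Iic (0:ℝ)) := by
  simpa [smul_eq_mul] using integrableOn_exp_smul hc g hg (by simpa using hA)

set_option maxHeartbeats 2000000 in
theorem stmt_11 (d : ℕ) (r c₁ c₂ ε M AF AG : ℝ) (hc₁ : 0 < c₁) (hc₂ : 0 < c₂)
    (hc : c₂ < 2 * c₁) (hε : 0 < ε) (hr : 0 < r)
    (F G : EuclideanSpace ℝ (Fin d) → ℝ)
    (hF : ContDiff ℝ 1 F) (hG : ContDiff ℝ 1 G)
    (hMF : ∀ x y, ‖gradient F x - gradient F y‖ ≤ M * ‖x - y‖)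
    (hMG : ∀ x y, ‖gradient G x - gradient G y‖ ≤ M * ‖x - y‖)
    (hAF : ∀ x, ‖gradient F x‖ ≤ AF) (hAG : ∀ x, ‖gradient G x‖ ≤ AG) :
    ∃ C : ℝ, ∀ (ξ : ℝ → EuclideanSpace ℝ (Fin d)), Continuous ξ →
      ∀ B : ℝ, (∀ s ≤ (0:ℝ), Real.exp (r * s) * ‖ξ s‖ ≤ B) →
        ‖HF d c₁ c₂ ε F ξ - HF d c₁ c₂ ε G ξ‖ ≤
          C * ∫ s in Set.Iic (0:ℝ),
            Real.exp (min c₁ c₂ * s) * ‖gradient F (ξ s) - gradient G (ξ s)‖ := by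
  classical
  set m := min c₁ c₂ with hm_def
  have hm : 0 < m := lt_min hc₁ hc₂
  have hAF0 : 0 ≤ AF := le_trans (norm_nonneg _) (hAF 0)
  have hAG0 : 0 ≤ AG := le_trans (norm_nonneg _) (hAG 0)
  have hsε : 0 < Real.sqrt ε := Real.sqrt_pos.mpr hε
  -- continuity of the gradients
  have hgradc : ∀ (H : EuclideanSpace ℝ (Fin d) → ℝ), ContDiff ℝ 1 H →
      Continuous (gradient H) := by
    intro H hH
    have : Continuous (fun x => fderiv ℝ H x) := hH.continuous_fderiv one_ne_zero
    exact (InnerProductSpace.toDual ℝ (EuclideanSpace ℝ (Fin d))).symm.continuous.comp this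
  refine ⟨c₁ * (Real.sqrt ε)⁻¹ + c₂ * (AF + AG) * AG * (2 * Real.sqrt ε * ε)⁻¹, ?_⟩
  intro ξ hξ B hB
  set gF : ℝ → EuclideanSpace ℝ (Fin d) := fun s => gradient F (ξ s) with hgF_def
  set gG : ℝ → EuclideanSpace ℝ (Fin d) := fun s => gradient G (ξ s) with hgG_def
  have hgFc : Continuous gF := (hgradc F hF).comp hξ
  have hgGc : Continuous gG := (hgradc G hG).comp hξ
  have hgFb : ∀ s, ‖gF s‖ ≤ AF := fun s => hAF _
  have hgGb : ∀ s, ‖gG s‖ ≤ AG := fun s => hAG _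
  -- the key integral
  set K : ℝ := ∫ s in Set.Iic (0:ℝ), Real.exp (m * s) * ‖gF s - gG s‖ with hK_def
  have hdiffc : Continuous (fun s => ‖gF s - gG s‖) := (hgFc.sub hgGc).norm
  have hdiffb : ∀ s, |‖gF s - gG s‖| ≤ AF + AG := by
    intro s
    rw [abs_of_nonneg (norm_nonneg _)]
    exact le_trans (norm_sub_le _ _) (add_le_add (hgFb s) (hgGb s))
  have hiK : IntegrableOn (fun s => Real.exp (m * s) * ‖gF s - gG s‖) (Set.Iic (0:ℝ)) :=
    integrableOn_exp_mul_fun hm _ hdiffc hdiffb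
  have hK0 : 0 ≤ K := by
    apply setIntegral_nonneg measurableSet_Iic
    intro s _
    exact mul_nonneg (Real.exp_pos _).le (norm_nonneg _)
  -- comparison: for c ≥ m, ∫ exp(c s) ‖gF - gG‖ ≤ K
  have hcomp : ∀ c : ℝ, 0 < c → m ≤ c →
      (∫ s in Set.Iic (0:ℝ), Real.exp (c * s) * ‖gF s - gG s‖) ≤ K := by
    intro c hc hmc
    apply setIntegral_mono_on (integrableOn_exp_mul_fun hc _ hdiffc hdiffb) hiK
      measurableSet_Iic
    intro s hs
    apply mul_le_mul_of_nonneg_right _ (norm_nonneg _)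
    exact Real.exp_le_exp.mpr (mul_le_mul_of_nonpos_right hmc hs)
  -- integrability of the pieces
  have hiJF : IntegrableOn (fun s => Real.exp (c₁ * s) • gF s) (Set.Iic (0:ℝ)) :=
    integrableOn_exp_smul hc₁ gF hgFc hgFb
  have hiJG : IntegrableOn (fun s => Real.exp (c₁ * s) • gG s) (Set.Iic (0:ℝ)) :=
    integrableOn_exp_smul hc₁ gG hgGc hgGb
  have hsqb : ∀ (g : ℝ → EuclideanSpace ℝ (Fin d)) (A : ℝ), 0 ≤ A → (∀ s, ‖g s‖ ≤ A) →
      ∀ s : ℝ, |‖g s‖ ^ 2| ≤ A ^ 2 := by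
    intro g A hA0 hA s
    rw [abs_of_nonneg (sq_nonneg _)]
    exact pow_le_pow_left₀ (norm_nonneg _) (hA s) 2
  have hiIF : IntegrableOn (fun s => Real.exp (c₂ * s) * ‖gF s‖ ^ 2) (Set.Iic (0:ℝ)) :=
    integrableOn_exp_mul_fun hc₂ _ (hgFc.norm.pow 2) (hsqb gF AF hAF0 hgFb)
  have hiIG : IntegrableOn (fun s => Real.exp (c₂ * s) * ‖gG s‖ ^ 2) (Set.Iic (0:ℝ)) :=
    integrableOn_exp_mul_fun hc₂ _ (hgGc.norm.pow 2) (hsqb gG AG hAG0 hgGb)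
  -- notation
  set JF : EuclideanSpace ℝ (Fin d) := ∫ s in Set.Iic (0:ℝ), Real.exp (c₁ * s) • gF s with hJF
  set JG : EuclideanSpace ℝ (Fin d) := ∫ s in Set.Iic (0:ℝ), Real.exp (c₁ * s) • gG s with hJG
  set IF : ℝ := ∫ s in Set.Iic (0:ℝ), Real.exp (c₂ * s) * ‖gF s‖ ^ 2 with hIF
  set IG : ℝ := ∫ s in Set.Iic (0:ℝ), Real.exp (c₂ * s) * ‖gG s‖ ^ 2 with hIG
  have hIF0 : 0 ≤ IF := setIntegral_nonneg measurableSet_Iic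
    (fun s _ => mul_nonneg (Real.exp_pos _).le (sq_nonneg _))
  have hIG0 : 0 ≤ IG := setIntegral_nonneg measurableSet_Iic
    (fun s _ => mul_nonneg (Real.exp_pos _).le (sq_nonneg _))
  set aF : ℝ := ε + c₂ * IF with haF
  set aG : ℝ := ε + c₂ * IG with haG
  have haF0 : ε ≤ aF := le_add_of_nonneg_right (mul_nonneg hc₂.le hIF0)
  have haG0 : ε ≤ aG := le_add_of_nonneg_right (mul_nonneg hc₂.le hIG0)
  set sF : ℝ := Real.sqrt aF with hsF
  set sG : ℝ := Real.sqrt aG with hsG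
  have hsF0 : Real.sqrt ε ≤ sF := Real.sqrt_le_sqrt haF0
  have hsG0 : Real.sqrt ε ≤ sG := Real.sqrt_le_sqrt haG0
  have hsFpos : 0 < sF := lt_of_lt_of_le hsε hsF0
  have hsGpos : 0 < sG := lt_of_lt_of_le hsε hsG0
  -- Bound on ‖JF - JG‖
  have hJdiff : ‖JF - JG‖ ≤ K := by
    rw [hJF, hJG, ← integral_sub hiJF hiJG]
    calc ‖∫ s in Set.Iic (0:ℝ), (Real.exp (c₁ * s) • gF s - Real.exp (c₁ * s) • gG s)‖
        ≤ ∫ s in Set.Iic (0:ℝ), ‖Real.exp (c₁ * s) • gF s - Real.exp (c₁ * s) • gG s‖ :=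
          norm_integral_le_integral_norm _
      _ = ∫ s in Set.Iic (0:ℝ), Real.exp (c₁ * s) * ‖gF s - gG s‖ := by
          congr 1
          ext s
          rw [← smul_sub, norm_smul, Real.norm_eq_abs, abs_of_pos (Real.exp_pos _)]
      _ ≤ K := hcomp c₁ hc₁ (min_le_left _ _)
  -- Bound on ‖JG‖
  have hJGb : ‖JG‖ ≤ AG * c₁⁻¹ := by
    rw [hJG]
    calc ‖∫ s in Set.Iic (0:ℝ), Real.exp (c₁ * s) • gG s‖
        ≤ ∫ s in Set.Iic (0:ℝ), ‖Real.exp (c₁ * s) • gG s‖ := norm_integral_le_integral_norm _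
      _ ≤ ∫ s in Set.Iic (0:ℝ), Real.exp (c₁ * s) * AG := by
          apply setIntegral_mono_on hiJG.norm ((integrableOn_exp_mul_Iic' hc₁).mul_const AG)
            measurableSet_Iic
          intro s _
          rw [norm_smul, Real.norm_eq_abs, abs_of_pos (Real.exp_pos _)]
          exact mul_le_mul_of_nonneg_left (hgGb s) (Real.exp_pos _).le
      _ = (∫ s in Set.Iic (0:ℝ), Real.exp (c₁ * s)) * AG := by
          rw [MeasureTheory.integral_mul_const]
      _ = AG * c₁⁻¹ := by rw [integral_exp_mul_Iic' hc₁, mul_comm]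
  -- Bound on |IF - IG|
  have hIdiff : |IF - IG| ≤ (AF + AG) * K := by
    rw [hIF, hIG, ← integral_sub hiIF hiIG]
    have habs : |∫ s in Set.Iic (0:ℝ), (Real.exp (c₂ * s) * ‖gF s‖ ^ 2 -
        Real.exp (c₂ * s) * ‖gG s‖ ^ 2)| ≤ ∫ s in Set.Iic (0:ℝ),
        |Real.exp (c₂ * s) * ‖gF s‖ ^ 2 - Real.exp (c₂ * s) * ‖gG s‖ ^ 2| := by
      simpa [Real.norm_eq_abs] using norm_integral_le_integral_norm
        (μ := volume.restrict (Set.Iic (0:ℝ)))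
        (fun s => Real.exp (c₂ * s) * ‖gF s‖ ^ 2 - Real.exp (c₂ * s) * ‖gG s‖ ^ 2)
    refine le_trans habs ?_
    have hpt : ∀ s ∈ Set.Iic (0:ℝ),
        |Real.exp (c₂ * s) * ‖gF s‖ ^ 2 - Real.exp (c₂ * s) * ‖gG s‖ ^ 2| ≤
        (AF + AG) * (Real.exp (m * s) * ‖gF s - gG s‖) := by
      intro s hs
      rw [← mul_sub, abs_mul, abs_of_pos (Real.exp_pos _)]
      have h1 : |‖gF s‖ ^ 2 - ‖gG s‖ ^ 2| ≤ (AF + AG) * ‖gF s - gG s‖ := by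
        have : ‖gF s‖ ^ 2 - ‖gG s‖ ^ 2 = (‖gF s‖ + ‖gG s‖) * (‖gF s‖ - ‖gG s‖) := by ring
        rw [this, abs_mul]
        apply mul_le_mul
        · rw [abs_of_nonneg (by positivity)]
          exact add_le_add (hgFb s) (hgGb s)
        · exact abs_norm_sub_norm_le _ _
        · exact abs_nonneg _
        · exact add_nonneg hAF0 hAG0
      have h2 : Real.exp (c₂ * s) ≤ Real.exp (m * s) :=
        Real.exp_le_exp.mpr (mul_le_mul_of_nonpos_right (min_le_right _ _) hs)
      calc Real.exp (c₂ * s) * |‖gF s‖ ^ 2 - ‖gG s‖ ^ 2|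
          ≤ Real.exp (m * s) * ((AF + AG) * ‖gF s - gG s‖) := by
            apply mul_le_mul h2 h1 (abs_nonneg _) (Real.exp_pos _).le
        _ = (AF + AG) * (Real.exp (m * s) * ‖gF s - gG s‖) := by ring
    calc (∫ s in Set.Iic (0:ℝ),
          |Real.exp (c₂ * s) * ‖gF s‖ ^ 2 - Real.exp (c₂ * s) * ‖gG s‖ ^ 2|)
        ≤ ∫ s in Set.Iic (0:ℝ), (AF + AG) * (Real.exp (m * s) * ‖gF s - gG s‖) := by
          refine setIntegral_mono_on ?_ ?_ measurableSet_Iic hpt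
          · exact (hiIF.sub hiIG).abs
          · exact hiK.const_mul _
      _ = (AF + AG) * K := by rw [MeasureTheory.integral_const_mul]
  -- Bound on |sF⁻¹ - sG⁻¹|
  have hsdiff : |sF⁻¹ - sG⁻¹| ≤ c₂ * (AF + AG) * K * (2 * Real.sqrt ε * ε)⁻¹ := by
    have h1 : sF⁻¹ - sG⁻¹ = (sG - sF) / (sF * sG) := by
      field_simp
    have h2 : |sG - sF| * (sF + sG) = |aG - aF| := by
      rw [← abs_of_pos (show (0:ℝ) < sF + sG by positivity), ← abs_mul]
      congr 1
      have hsF2 : sF ^ 2 = aF := Real.sq_sqrt (le_trans hε.le haF0)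
      have hsG2 : sG ^ 2 = aG := Real.sq_sqrt (le_trans hε.le haG0)
      nlinarith [hsF2, hsG2]
    have h3 : |aG - aF| ≤ c₂ * ((AF + AG) * K) := by
      rw [haF, haG]
      have : ε + c₂ * IG - (ε + c₂ * IF) = c₂ * (IG - IF) := by ring
      rw [this, abs_mul, abs_of_pos hc₂, abs_sub_comm]
      exact mul_le_mul_of_nonneg_left hIdiff hc₂.le
    have h4 : |sG - sF| ≤ c₂ * ((AF + AG) * K) / (2 * Real.sqrt ε) := by
      rw [le_div_iff₀ (by positivity)]
      calc |sG - sF| * (2 * Real.sqrt ε) ≤ |sG - sF| * (sF + sG) := by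
            apply mul_le_mul_of_nonneg_left _ (abs_nonneg _)
            linarith
        _ = |aG - aF| := h2
        _ ≤ c₂ * ((AF + AG) * K) := h3
    rw [h1, abs_div, abs_of_pos (by positivity : (0:ℝ) < sF * sG)]
    have hεsFsG : ε ≤ sF * sG := by
      calc ε = Real.sqrt ε * Real.sqrt ε := (Real.mul_self_sqrt hε.le).symm
        _ ≤ sF * sG := mul_le_mul hsF0 hsG0 hsε.le hsFpos.le
    calc |sG - sF| / (sF * sG) ≤ (c₂ * ((AF + AG) * K) / (2 * Real.sqrt ε)) / ε := by
          apply div_le_div₀ (by positivity) h4 hε hεsFsG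
      _ = c₂ * (AF + AG) * K * (2 * Real.sqrt ε * ε)⁻¹ := by
          field_simp
  -- put it together
  have hsFinv : sF⁻¹ ≤ (Real.sqrt ε)⁻¹ := inv_anti₀ hsε hsF0
  have eqF : HF d c₁ c₂ ε F ξ = -(sF⁻¹ • (c₁ • JF)) := rfl
  have eqG : HF d c₁ c₂ ε G ξ = -(sG⁻¹ • (c₁ • JG)) := rfl
  have key : HF d c₁ c₂ ε F ξ - HF d c₁ c₂ ε G ξ =
      -((c₁ * sF⁻¹) • (JF - JG) + ((c₁ * sF⁻¹) - (c₁ * sG⁻¹)) • JG) := by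
    rw [eqF, eqG]
    module
  rw [key, norm_neg]
  calc ‖(c₁ * sF⁻¹) • (JF - JG) + ((c₁ * sF⁻¹) - (c₁ * sG⁻¹)) • JG‖
      ≤ ‖(c₁ * sF⁻¹) • (JF - JG)‖ + ‖((c₁ * sF⁻¹) - (c₁ * sG⁻¹)) • JG‖ := norm_add_le _ _
    _ = |c₁ * sF⁻¹| * ‖JF - JG‖ + |c₁ * sF⁻¹ - c₁ * sG⁻¹| * ‖JG‖ := by
        rw [norm_smul, norm_smul, Real.norm_eq_abs, Real.norm_eq_abs]
    _ ≤ (c₁ * (Real.sqrt ε)⁻¹) * K +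
        (c₁ * (c₂ * (AF + AG) * K * (2 * Real.sqrt ε * ε)⁻¹)) * (AG * c₁⁻¹) := by
        apply add_le_add
        · apply mul_le_mul _ hJdiff (norm_nonneg _) (by positivity)
          rw [abs_of_pos (by positivity)]
          exact mul_le_mul_of_nonneg_left hsFinv hc₁.le
        · apply mul_le_mul _ hJGb (norm_nonneg _) (by positivity)
          rw [← mul_sub, abs_mul, abs_of_pos hc₁]
          exact mul_le_mul_of_nonneg_left hsdiff hc₁.le
    _ = (c₁ * (Real.sqrt ε)⁻¹ + c₂ * (AF + AG) * AG * (2 * Real.sqrt ε * ε)⁻¹) * K := by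
        field_simp
end

section
/- The function R(x) = λ ( (‖x‖² + 1)^{1/2} - (K² + 1)^{1/2} )² · 1_{{‖x‖ > K+1}} on R^d is (m, b)-dissipative for suitable m, b > 0 depending on λ, K, d; i.e., there exist m, b > 0 such that ⟨∇R(x), x⟩ ≥ m‖x‖² - b for all x ∈ R^d. -/
set_option maxHeartbeats 1000000

open RealInnerProductSpace

theorem stmt_12 (d : ℕ) (lam K : ℝ) (hlam : 0 < lam) (hK : 0 < K) :
    ∃ m b : ℝ, 0 < m ∧ 0 < b ∧
      ∀ x : EuclideanSpace ℝ (Fin d),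
        m * ‖x‖ ^ 2 - b ≤
          ⟪gradient (fun y : EuclideanSpace ℝ (Fin d) =>
              if ‖y‖ > K + 1 then
                lam * (Real.sqrt (‖y‖ ^ 2 + 1) - Real.sqrt (K ^ 2 + 1)) ^ 2
              else 0) x, x⟫ := by
  classical
  set c : ℝ := Real.sqrt (K ^ 2 + 1) with hc
  set s₀ : ℝ := Real.sqrt ((K + 1) ^ 2 + 1) with hs₀
  have hcpos : 0 < c := Real.sqrt_pos.2 (by positivity)
  have hs₀pos : 0 < s₀ := Real.sqrt_pos.2 (by positivity)
  have hcs₀ : c < s₀ := by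
    apply Real.sqrt_lt_sqrt (by positivity)
    nlinarith
  set f : EuclideanSpace ℝ (Fin d) → ℝ := fun y =>
    if ‖y‖ > K + 1 then lam * (Real.sqrt (‖y‖ ^ 2 + 1) - c) ^ 2 else 0 with hf
  set m : ℝ := 2 * lam * (1 - c / s₀) with hm
  have hmpos : 0 < m := by
    have : c / s₀ < 1 := (div_lt_one hs₀pos).2 hcs₀
    rw [hm]; nlinarith
  refine ⟨m, m * (K + 1) ^ 2 + 1, hmpos, by positivity, fun x => ?_⟩
  rcases lt_trichotomy ‖x‖ (K + 1) with hx | hx | hx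
  · -- f vanishes near x
    have hzero : gradient f x = 0 := by
      have hev : f =ᶠ[nhds x] fun _ => (0 : ℝ) := by
        have hopen : IsOpen {y : EuclideanSpace ℝ (Fin d) | ‖y‖ < K + 1} :=
          isOpen_lt continuous_norm continuous_const
        filter_upwards [hopen.mem_nhds hx] with y hy
        simp only [hf]
        rw [if_neg (not_lt.2 hy.le)]
      rw [hev.gradient_eq]; exact gradient_const ..
    rw [hzero, inner_zero_left]
    have h1 : ‖x‖ ^ 2 ≤ (K + 1) ^ 2 := by nlinarith [norm_nonneg x]
    have h2 : m * ‖x‖ ^ 2 ≤ m * (K + 1) ^ 2 := by nlinarith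
    linarith
  · -- boundary: f not differentiable at x
    have hnd : ¬ DifferentiableAt ℝ f x := by
      intro hdiff
      have hfx : f x = 0 := by simp [hf, hx]
      have h1 : Filter.Tendsto (fun t : ℝ => f (t • x)) (nhdsWithin 1 (Set.Ioi 1))
          (nhds 0) := by
        have hpath : Filter.Tendsto (fun t : ℝ => t • x) (nhds 1) (nhds x) := by
          have := (continuous_id.smul (continuous_const : Continuous fun _ : ℝ => x)).tendsto 1
          simpa using (show Continuous fun t : ℝ => t • x from continuous_id.smul continuous_const).tendsto 1
        have hT : Filter.Tendsto f (nhds x) (nhds (f x)) := hdiff.continuousAt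
        have hcomp : Filter.Tendsto (f ∘ fun t : ℝ => t • x)
            (nhdsWithin 1 (Set.Ioi 1)) (nhds (f x)) :=
          hT.comp (hpath.mono_left nhdsWithin_le_nhds)
        simpa [Function.comp_def, hfx] using hcomp
      set L₀ : ℝ := lam * (s₀ - c) ^ 2 with hL₀
      have h2 : Filter.Tendsto (fun t : ℝ => f (t • x)) (nhdsWithin 1 (Set.Ioi 1))
          (nhds L₀) := by
        have hG : Filter.Tendsto (fun t : ℝ => lam * (Real.sqrt ((t * (K + 1)) ^ 2 + 1) - c) ^ 2)
            (nhdsWithin 1 (Set.Ioi 1)) (nhds L₀) := by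
          have hcont : Continuous fun t : ℝ =>
              lam * (Real.sqrt ((t * (K + 1)) ^ 2 + 1) - c) ^ 2 := by
            continuity
          have := (hcont.tendsto 1).mono_left (nhdsWithin_le_nhds (s := Set.Ioi 1))
          simpa [hL₀, hs₀] using this
        apply hG.congr'
        filter_upwards [self_mem_nhdsWithin] with t ht
        have ht1 : (1 : ℝ) < t := ht
        have hnorm : ‖t • x‖ = t * (K + 1) := by
          rw [norm_smul, hx, Real.norm_eq_abs, abs_of_pos (by linarith)]
        have hgt : ‖t • x‖ > K + 1 := by
          rw [hnorm]; nlinarith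
        simp only [hf]
        rw [if_pos hgt, hnorm]
      have huniq := tendsto_nhds_unique h2 h1
      rw [hL₀] at huniq
      have hd : 0 < s₀ - c := by linarith
      have hsc : 0 < lam * (s₀ - c) ^ 2 := by positivity
      linarith
    rw [gradient_eq_zero_of_not_differentiableAt hnd, inner_zero_left]
    have h1 : ‖x‖ ^ 2 ≤ (K + 1) ^ 2 := by rw [hx]
    have h2 : m * ‖x‖ ^ 2 ≤ m * (K + 1) ^ 2 := by nlinarith
    linarith
  · -- exterior: compute the gradient
    set s : ℝ := Real.sqrt (‖x‖ ^ 2 + 1) with hs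
    have hspos : 0 < s := Real.sqrt_pos.2 (by positivity)
    have hq : HasFDerivAt (fun y : EuclideanSpace ℝ (Fin d) => ‖y‖ ^ 2 + 1) (2 • innerSL ℝ x) x := by
      simpa using ((hasFDerivAt_id x).norm_sq).add_const 1
    have hsq : HasDerivAt Real.sqrt (1 / (2 * s)) (‖x‖ ^ 2 + 1) :=
      Real.hasDerivAt_sqrt (by positivity)
    have h4 : HasFDerivAt (fun y : EuclideanSpace ℝ (Fin d) => Real.sqrt (‖y‖ ^ 2 + 1))
        ((1 / (2 * s)) • (2 • innerSL ℝ x)) x := hsq.comp_hasFDerivAt x hq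
    have h5 := h4.sub_const c
    have h6 := h5.mul h5
    have h7 := h6.const_mul lam
    set L : EuclideanSpace ℝ (Fin d) →L[ℝ] ℝ := lam •
      ((Real.sqrt (‖x‖ ^ 2 + 1) - c) • ((1 / (2 * s)) • (2 • innerSL ℝ x)) +
        (Real.sqrt (‖x‖ ^ 2 + 1) - c) • ((1 / (2 * s)) • (2 • innerSL ℝ x))) with hL
    have hfd : HasFDerivAt f L x := by
      have hev : f =ᶠ[nhds x] fun y =>
          lam * ((Real.sqrt (‖y‖ ^ 2 + 1) - c) * (Real.sqrt (‖y‖ ^ 2 + 1) - c)) := by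
        have hopen : IsOpen {y : EuclideanSpace ℝ (Fin d) | K + 1 < ‖y‖} :=
          isOpen_lt continuous_const continuous_norm
        filter_upwards [hopen.mem_nhds hx] with y hy
        simp only [hf]
        rw [if_pos hy, sq]
      exact h7.congr_of_eventuallyEq hev
    have hgrad : gradient f x = (InnerProductSpace.toDual ℝ (EuclideanSpace ℝ (Fin d))).symm L :=
      hfd.hasGradientAt.gradient
    rw [hgrad, InnerProductSpace.toDual_symm_apply]
    have hLx : L x = 2 * lam * (s - c) / s * ‖x‖ ^ 2 := by
      simp only [hL, ContinuousLinearMap.smul_apply, ContinuousLinearMap.add_apply,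
        innerSL_apply_apply, real_inner_self_eq_norm_sq, smul_eq_mul, ← hs]
      field_simp
      ring
    rw [hLx]
    -- s₀ ≤ s, hence m ≤ 2 lam (s - c)/s
    have hs₀s : s₀ ≤ s := by
      apply Real.sqrt_le_sqrt
      nlinarith
    have hkey : m ≤ 2 * lam * (s - c) / s := by
      have h2 : 2 * lam * (s - c) / s = 2 * lam * (1 - c / s) := by
        field_simp
      have h3 : c / s ≤ c / s₀ := div_le_div_of_nonneg_left hcpos.le hs₀pos hs₀s
      rw [hm, h2]
      nlinarith
    have hb : (0:ℝ) < m * (K + 1) ^ 2 + 1 := by positivity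
    have := mul_le_mul_of_nonneg_right hkey (sq_nonneg ‖x‖)
    linarith
end

section
/- Contraction step for the case d(x,y)=1 with large Lyapunov values: in the setting above (P(x,V) ≤ V(x)/8 + K_V, Q(y,V) ≤ V(y)/8 + K_V, d ≤ 1), if d(x,y) = 1 and V(x)+V(y) ≥ 4K_V, then for every δ > 0, W_{d̃_δ}(P(x,·), Q(y,·))² ≤ max( (1+2δK_V)/(1+3δK_V), 1/2 ) · d̃_δ(x,y)², where d̃_δ(x,y) = √( d(x,y)(1 + δV(x) + δV(y)) ). -/
open MeasureTheory ProbabilityTheory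

/-- Wasserstein-type optimal transport cost for the cost function `c`. -/
noncomputable def Wcost {S : Type*} [MeasurableSpace S] (c : S → S → ℝ)
    (μ ν : Measure S) : ENNReal :=
  ⨅ (π : Measure (S × S)) (_ : π.map Prod.fst = μ ∧ π.map Prod.snd = ν),
    ∫⁻ p, ENNReal.ofReal (c p.1 p.2) ∂π

lemma tonelli_le {α β : Type*} [MeasurableSpace α] [MeasurableSpace β]
    (μ : Measure α) (ν : Measure β) [SFinite ν] (f : α × β → ENNReal) :
    ∫⁻ z, f z ∂(μ.prod ν) ≤ ∫⁻ x, ∫⁻ y, f (x, y) ∂ν ∂μ := by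
  rw [MeasureTheory.lintegral]
  refine iSup₂_le fun g hg => ?_
  calc g.lintegral (μ.prod ν) = ∫⁻ z, g z ∂(μ.prod ν) := (g.lintegral_eq_lintegral _).symm
    _ = ∫⁻ x, ∫⁻ y, g (x, y) ∂ν ∂μ :=
      MeasureTheory.lintegral_prod _ g.measurable.aemeasurable
    _ ≤ ∫⁻ x, ∫⁻ y, f (x, y) ∂ν ∂μ :=
      lintegral_mono fun x1 => lintegral_mono fun y1 => hg _

set_option maxHeartbeats 1000000 in
theorem stmt_15 {S : Type*} [TopologicalSpace S] [PolishSpace S]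
    [MeasurableSpace S] [BorelSpace S]
    (d : S → S → ℝ) (hsymm : ∀ x y, d x y = d y x)
    (hlsc : LowerSemicontinuous fun p : S × S => d p.1 p.2)
    (hzero : ∀ x y, d x y = 0 ↔ x = y)
    (hnonneg : ∀ x y, 0 ≤ d x y) (hle : ∀ x y, d x y ≤ 1)
    (V : S → ℝ) (hV : ∀ x, 0 ≤ V x)
    (KV : ℝ) (hKV : 0 < KV)
    (P Q : Kernel S S) [IsMarkovKernel P] [IsMarkovKernel Q]
    (hPV : ∀ x, ∫⁻ z, ENNReal.ofReal (V z) ∂(P x) ≤ ENNReal.ofReal (V x / 8 + KV))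
    (hQV : ∀ y, ∫⁻ z, ENNReal.ofReal (V z) ∂(Q y) ≤ ENNReal.ofReal (V y / 8 + KV))
    (δ : ℝ) (hδ : 0 < δ) (x y : S) (hxy : d x y = 1) (hVxy : 4 * KV ≤ V x + V y) :
    (Wcost (fun a b => Real.sqrt (d a b * (1 + δ * V a + δ * V b))) (P x) (Q y)) ^ 2 ≤
      ENNReal.ofReal (max ((1 + 2 * δ * KV) / (1 + 3 * δ * KV)) (1 / 2)) *
        ENNReal.ofReal (Real.sqrt (d x y * (1 + δ * V x + δ * V y))) ^ 2 := by
  have hA0 : (0:ℝ) < 1 + 2 * δ * KV + δ * (V x + V y) / 8 := by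
    nlinarith [hV x, hV y, mul_pos hδ hKV]
  set A : ℝ := 1 + 2 * δ * KV + δ * (V x + V y) / 8 with hA
  have hu0 : 0 < Real.sqrt A := Real.sqrt_pos.mpr hA0
  have husq : Real.sqrt A ^ 2 = A := Real.sq_sqrt hA0.le
  set c2 : ℝ := δ / (2 * Real.sqrt A) with hc2
  have hc2_0 : 0 ≤ c2 := by positivity
  have hB0 : (0:ℝ) ≤ 1 + δ * V x + δ * V y := by nlinarith [hV x, hV y]
  -- main bound
  have main : Wcost (fun a b => Real.sqrt (d a b * (1 + δ * V a + δ * V b))) (P x) (Q y)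
      ≤ ENNReal.ofReal (Real.sqrt A) := by
    have hcoupling : ((P x).prod (Q y)).map Prod.fst = P x ∧
        ((P x).prod (Q y)).map Prod.snd = Q y :=
      ⟨Measure.fst_prod, Measure.snd_prod⟩
    refine le_trans (iInf₂_le ((P x).prod (Q y)) hcoupling) ?_
    have hpoint : ∀ a b : S, ENNReal.ofReal (Real.sqrt (d a b * (1 + δ * V a + δ * V b)))
        ≤ ENNReal.ofReal ((A + 1 + δ * V a) / (2 * Real.sqrt A) + c2 * V b) := by
      intro a b
      apply ENNReal.ofReal_le_ofReal
      have ht0 : (0:ℝ) ≤ 1 + δ * V a + δ * V b := by nlinarith [hV a, hV b]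
      have h1 : Real.sqrt (d a b * (1 + δ * V a + δ * V b))
          ≤ Real.sqrt (1 + δ * V a + δ * V b) := by
        apply Real.sqrt_le_sqrt; nlinarith [hnonneg a b, hle a b]
      refine h1.trans ?_
      have h2 : Real.sqrt (1 + δ * V a + δ * V b)
          ≤ (A + (1 + δ * V a + δ * V b)) / (2 * Real.sqrt A) := by
        rw [le_div_iff₀ (by positivity)]
        nlinarith [sq_nonneg (Real.sqrt A - Real.sqrt (1 + δ * V a + δ * V b)),
          Real.sq_sqrt ht0, husq, Real.sqrt_nonneg A,
          Real.sqrt_nonneg (1 + δ * V a + δ * V b)]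
      refine h2.trans (le_of_eq ?_)
      rw [hc2]; field_simp; ring
    calc ∫⁻ p, ENNReal.ofReal (Real.sqrt (d p.1 p.2 * (1 + δ * V p.1 + δ * V p.2)))
          ∂((P x).prod (Q y))
        ≤ ∫⁻ p, (ENNReal.ofReal ((A + 1 + δ * V p.1) / (2 * Real.sqrt A))
            + ENNReal.ofReal c2 * ENNReal.ofReal (V p.2)) ∂((P x).prod (Q y)) := by
          refine lintegral_mono fun p => ?_
          refine (hpoint p.1 p.2).trans (le_of_eq ?_)
          rw [ENNReal.ofReal_add
              (div_nonneg (by nlinarith [hA0, mul_nonneg hδ.le (hV p.1)]) (by positivity))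
              (mul_nonneg hc2_0 (hV p.2)),
            ENNReal.ofReal_mul hc2_0]
      _ ≤ ∫⁻ a, ∫⁻ b, (ENNReal.ofReal ((A + 1 + δ * V a) / (2 * Real.sqrt A))
            + ENNReal.ofReal c2 * ENNReal.ofReal (V b)) ∂(Q y) ∂(P x) :=
          tonelli_le _ _ _
      _ ≤ ∫⁻ a, (ENNReal.ofReal ((A + 1 + δ * V a) / (2 * Real.sqrt A))
            + ENNReal.ofReal c2 * ENNReal.ofReal (V y / 8 + KV)) ∂(P x) := by
          refine lintegral_mono fun a => ?_
          rw [lintegral_add_left measurable_const,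
            lintegral_const_mul' _ _ ENNReal.ofReal_ne_top, lintegral_const,
            measure_univ, mul_one]
          exact add_le_add_right (mul_le_mul_right (hQV y) _) _
      _ = ∫⁻ a, (ENNReal.ofReal ((A + 1) / (2 * Real.sqrt A) + c2 * (V y / 8 + KV))
            + ENNReal.ofReal c2 * ENNReal.ofReal (V a)) ∂(P x) := by
          congr 1; funext a
          rw [← ENNReal.ofReal_mul hc2_0, ← ENNReal.ofReal_mul hc2_0,
            ← ENNReal.ofReal_add
              (div_nonneg (by nlinarith [hA0, mul_nonneg hδ.le (hV a)]) (by positivity))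
              (mul_nonneg hc2_0 (by nlinarith [hV y, hKV.le])),
            ← ENNReal.ofReal_add
              (add_nonneg (div_nonneg (by nlinarith [hA0]) (by positivity))
                (mul_nonneg hc2_0 (by nlinarith [hV y, hKV.le])))
              (mul_nonneg hc2_0 (hV a))]
          congr 1
          rw [hc2]; field_simp; ring
      _ ≤ ENNReal.ofReal ((A + 1) / (2 * Real.sqrt A) + c2 * (V y / 8 + KV))
            + ENNReal.ofReal c2 * ENNReal.ofReal (V x / 8 + KV) := by
          rw [lintegral_add_left measurable_const,
            lintegral_const_mul' _ _ ENNReal.ofReal_ne_top, lintegral_const,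
            measure_univ, mul_one]
          exact add_le_add_right (mul_le_mul_right (hPV x) _) _
      _ = ENNReal.ofReal ((A + 1) / (2 * Real.sqrt A) + c2 * (V y / 8 + KV)
            + c2 * (V x / 8 + KV)) := by
          rw [← ENNReal.ofReal_mul hc2_0,
            ← ENNReal.ofReal_add
              (add_nonneg (div_nonneg (by nlinarith [hA0]) (by positivity))
                (mul_nonneg hc2_0 (by nlinarith [hV y, hKV.le])))
              (mul_nonneg hc2_0 (by nlinarith [hV x, hKV.le]))]
      _ = ENNReal.ofReal (Real.sqrt A) := by
          congr 1
          have h2u : (2 * Real.sqrt A) ≠ 0 := by positivity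
          have : (A + 1) / (2 * Real.sqrt A) + c2 * (V y / 8 + KV) + c2 * (V x / 8 + KV)
              = Real.sqrt A := by
            rw [hc2, div_mul_eq_mul_div, div_mul_eq_mul_div, ← add_div,
              ← add_div, div_eq_iff h2u]
            linear_combination -(2:ℝ) * husq - hA
          rw [this]
  -- key real inequality
  have hM : A ≤ max ((1 + 2 * δ * KV) / (1 + 3 * δ * KV)) (1 / 2) * (1 + δ * V x + δ * V y) := by
    have h3 : (0:ℝ) < 1 + 3 * δ * KV := by nlinarith [mul_pos hδ hKV]
    have hr : A ≤ (1 + 2 * δ * KV) / (1 + 3 * δ * KV) * (1 + δ * V x + δ * V y) := by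
      rw [div_mul_eq_mul_div, le_div_iff₀ h3, hA]
      nlinarith [mul_pos hδ hKV, hVxy, hV x, hV y,
        mul_le_mul_of_nonneg_left hVxy hδ.le,
        mul_le_mul_of_nonneg_left hVxy (mul_nonneg (mul_nonneg hδ.le hδ.le) hKV.le)]
    exact hr.trans (mul_le_mul_of_nonneg_right (le_max_left _ _) hB0)
  have hMnn : (0:ℝ) ≤ max ((1 + 2 * δ * KV) / (1 + 3 * δ * KV)) (1 / 2) :=
    le_trans (by norm_num) (le_max_right _ _)
  calc (Wcost (fun a b => Real.sqrt (d a b * (1 + δ * V a + δ * V b))) (P x) (Q y)) ^ 2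
      ≤ ENNReal.ofReal (Real.sqrt A) ^ 2 := pow_le_pow_left₀ zero_le main 2
    _ = ENNReal.ofReal A := by
        rw [← ENNReal.ofReal_pow (Real.sqrt_nonneg _), husq]
    _ ≤ ENNReal.ofReal (max ((1 + 2 * δ * KV) / (1 + 3 * δ * KV)) (1 / 2)
          * (1 + δ * V x + δ * V y)) := ENNReal.ofReal_le_ofReal hM
    _ = ENNReal.ofReal (max ((1 + 2 * δ * KV) / (1 + 3 * δ * KV)) (1 / 2)) *
        ENNReal.ofReal (Real.sqrt (d x y * (1 + δ * V x + δ * V y))) ^ 2 := by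
        rw [ENNReal.ofReal_mul hMnn, hxy, one_mul,
          ← ENNReal.ofReal_pow (Real.sqrt_nonneg _), Real.sq_sqrt hB0]
end
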